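/- For α ∈ [0,1], define G(α) = inf over pairs (λ₁, λ₂) ∈ [0,2] × [0,2] of α·(λ₁² + λ₂² − 1)/2 + (1 − α)·((λ₁ − 1)² + (λ₂ − 1)²)/4. Then the supremum of G(α) over α ∈ [0,1] equals 7/2 − 2√3, and it is attained at α = 2/√3 − 1, i.e. G(2/√3 − 1) = 7/2 − 2√3. -/
import Mathlib

private lemma isLeast_aux (α : ℝ) (hα : α ∈ Set.Icc (0:ℝ) 1) :
    IsLeast ((fun p : ℝ × ℝ =>
        α * ((p.1 ^ 2 + p.2 ^ 2 - 1) / 2) + (1 - α) * (((p.1 - 1) ^ 2 + (p.2 - 1) ^ 2) / 4)) ''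
          (Set.Icc (0 : ℝ) 2 ×ˢ Set.Icc (0 : ℝ) 2))
      (α * (1 - 3 * α) / (2 * (1 + α))) := by
  obtain ⟨h0, h1⟩ := hα
  have hpos : (0:ℝ) < 1 + α := by linarith
  constructor
  · refine ⟨((1 - α) / (1 + α), (1 - α) / (1 + α)), ?_, ?_⟩
    · have hl : (0:ℝ) ≤ (1 - α) / (1 + α) := div_nonneg (by linarith) hpos.le
      have hu : (1 - α) / (1 + α) ≤ 2 := by
        rw [div_le_iff₀ hpos]; linarith
      exact ⟨⟨hl, hu⟩, ⟨hl, hu⟩⟩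
    · field_simp
      ring
  · rintro y ⟨⟨x₁, x₂⟩, ⟨⟨hx1, hx1'⟩, ⟨hx2, hx2'⟩⟩, rfl⟩
    simp only
    rw [div_le_iff₀ (by linarith : (0:ℝ) < 2 * (1 + α))]
    nlinarith [sq_nonneg ((1 + α) * x₁ - (1 - α)), sq_nonneg ((1 + α) * x₂ - (1 - α)),
      mul_nonneg h0 hx1, mul_nonneg h0 hx2]

theorem stmt_1 :
    let G : ℝ → ℝ := fun α =>
      sInf ((fun p : ℝ × ℝ =>
        α * ((p.1 ^ 2 + p.2 ^ 2 - 1) / 2) + (1 - α) * (((p.1 - 1) ^ 2 + (p.2 - 1) ^ 2) / 4)) ''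
          (Set.Icc (0 : ℝ) 2 ×ˢ Set.Icc (0 : ℝ) 2))
    sSup (G '' Set.Icc (0 : ℝ) 1) = 7 / 2 - 2 * Real.sqrt 3 ∧
      G (2 / Real.sqrt 3 - 1) = 7 / 2 - 2 * Real.sqrt 3 := by
  intro G
  have hs : Real.sqrt 3 ^ 2 = 3 := Real.sq_sqrt (by norm_num)
  have hs1 : (1:ℝ) ≤ Real.sqrt 3 := by nlinarith [Real.sqrt_nonneg 3]
  have hs2 : Real.sqrt 3 ≤ 2 := by nlinarith [Real.sqrt_nonneg 3]
  have hs0 : (0:ℝ) < Real.sqrt 3 := by linarith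
  set s := Real.sqrt 3
  have hmem : (2 / s - 1) ∈ Set.Icc (0:ℝ) 1 := by
    constructor
    · rw [le_sub_iff_add_le, zero_add, le_div_iff₀ hs0]; linarith
    · rw [sub_le_iff_le_add, div_le_iff₀ hs0]; nlinarith
  have hG : ∀ α ∈ Set.Icc (0:ℝ) 1, G α = α * (1 - 3 * α) / (2 * (1 + α)) := by
    intro α hα
    exact (isLeast_aux α hα).csInf_eq
  have hGstar : G (2 / s - 1) = 7 / 2 - 2 * s := by
    rw [hG _ hmem]
    have : s ≠ 0 := ne_of_gt hs0
    field_simp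
    nlinarith [hs]
  refine ⟨?_, hGstar⟩
  apply IsGreatest.csSup_eq
  constructor
  · exact ⟨2 / s - 1, hmem, hGstar⟩
  · rintro y ⟨α, hα, rfl⟩
    rw [hG _ hα]
    obtain ⟨h0, h1⟩ := hα
    have hpos : (0:ℝ) < 2 * (1 + α) := by linarith
    rw [div_le_iff₀ hpos]
    nlinarith [sq_nonneg (3 * α - 2 * s + 3)]
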